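/- Elliptical potential lemma: let φ_1,…,φ_K ∈ ℝ^d, Λ_k = λI + Σ_{j<k} φ_j φ_jᵀ with λ > 0. Then Σ_{k=1}^K min{1, ‖φ_k‖²_{Λ_k^{-1}}} ≤ 2 ln(det(Λ_{K+1})/det(λI)). -/

import Mathlib

open Matrix Finset

lemma key_min_log (x : ℝ) (hx : 0 ≤ x) : min 1 x ≤ 2 * Real.log (1 + x) := by
  have h0 : (0:ℝ) < 1 + x := by linarith
  have h1 : x / (1 + x) ≤ Real.log (1 + x) := by
    have h2 := Real.log_le_sub_one_of_pos (show (0:ℝ) < (1+x)⁻¹ by positivity)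
    rw [Real.log_inv] at h2
    have h3 : 1 - (1+x)⁻¹ = x / (1+x) := by field_simp; ring
    linarith
  have h4 : min 1 x ≤ 2 * (x / (1 + x)) := by
    rcases le_total x 1 with h | h
    · rw [min_eq_right h, mul_div_assoc', le_div_iff₀ h0]; nlinarith
    · rw [min_eq_left h, mul_div_assoc', le_div_iff₀ h0]; nlinarith
  linarith

lemma det_lemma (d : ℕ) (A : Matrix (Fin d) (Fin d) ℝ) (hA : A.PosDef) (u : Fin d → ℝ) :
    (A + Matrix.vecMulVec u u).det = A.det * (1 + u ⬝ᵥ A⁻¹ *ᵥ u) := by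
  rw [Matrix.vecMulVec_eq Unit, Matrix.det_add_replicateCol_mul_replicateRow hA.det_pos.ne'.isUnit]
  congr 1
  rw [Matrix.det_unique]
  simp [Matrix.mul_apply, Matrix.replicateRow, Matrix.replicateCol, dotProduct, Matrix.mulVec,
    Finset.mul_sum, Finset.sum_mul]
  rw [Finset.sum_comm]
  simp [mul_assoc]

theorem stmt5 (d K : ℕ) (lam : ℝ) (hlam : 0 < lam) (φ : ℕ → Fin d → ℝ)
    (Λ : ℕ → Matrix (Fin d) (Fin d) ℝ)
    (hΛ : ∀ k, Λ k = lam • (1 : Matrix (Fin d) (Fin d) ℝ) +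
        ∑ j ∈ Finset.range k, Matrix.vecMulVec (φ j) (φ j)) :
    ∑ k ∈ Finset.range K, min 1 (φ k ⬝ᵥ ((Λ k)⁻¹ *ᵥ φ k)) ≤
      2 * Real.log ((Λ K).det / (lam • (1 : Matrix (Fin d) (Fin d) ℝ)).det) := by
  have hdiag : (lam • (1 : Matrix (Fin d) (Fin d) ℝ)).PosDef := by
    rw [Matrix.smul_one_eq_diagonal]
    exact Matrix.posDef_diagonal_iff.mpr fun _ => hlam
  have hsum : ∀ k, ((∑ j ∈ Finset.range k, Matrix.vecMulVec (φ j) (φ j)) :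
      Matrix (Fin d) (Fin d) ℝ).PosSemidef := by
    intro k
    induction k with
    | zero => simpa using Matrix.PosSemidef.zero
    | succ n ih =>
        rw [Finset.sum_range_succ]
        refine ih.add ?_
        rw [Matrix.vecMulVec_eq Unit]
        have h := Matrix.posSemidef_conjTranspose_mul_self (Matrix.replicateRow Unit (φ n))
        simpa [Matrix.conjTranspose, Matrix.replicateRow, Matrix.replicateCol, Matrix.transpose,
          Matrix.map, starRingEnd_apply, star_trivial] using h
  have hpos : ∀ k, (Λ k).PosDef := by
    intro k; rw [hΛ k]; exact hdiag.add_posSemidef (hsum k)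
  set x : ℕ → ℝ := fun k => φ k ⬝ᵥ ((Λ k)⁻¹ *ᵥ φ k) with hxdef
  have hxnn : ∀ k, 0 ≤ x k := by
    intro k
    have h := ((hpos k).inv).posSemidef.re_dotProduct_nonneg (φ k)
    simpa using h
  have hdet : ∀ k, (Λ (k+1)).det = (Λ k).det * (1 + x k) := by
    intro k
    have h : Λ (k+1) = Λ k + Matrix.vecMulVec (φ k) (φ k) := by
      rw [hΛ (k+1), hΛ k, Finset.sum_range_succ, add_assoc]
    rw [h, det_lemma d _ (hpos k)]
  have hdpos : ∀ k, 0 < (Λ k).det := fun k => (hpos k).det_pos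
  have hlog : ∀ k, Real.log (1 + x k) =
      Real.log (Λ (k+1)).det - Real.log (Λ k).det := by
    intro k
    rw [hdet k, Real.log_mul (hdpos k).ne' (by have := hxnn k; linarith)]
    ring
  calc ∑ k ∈ Finset.range K, min 1 (x k)
      ≤ ∑ k ∈ Finset.range K, 2 * Real.log (1 + x k) :=
        Finset.sum_le_sum fun k _ => key_min_log (x k) (hxnn k)
    _ = 2 * ∑ k ∈ Finset.range K,
          (Real.log (Λ (k+1)).det - Real.log (Λ k).det) := by
        rw [Finset.mul_sum]; exact Finset.sum_congr rfl fun k _ => by rw [hlog k]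
    _ = 2 * (Real.log (Λ K).det - Real.log (Λ 0).det) := by
        rw [Finset.sum_range_sub (fun k => Real.log (Λ k).det)]
    _ = 2 * Real.log ((Λ K).det / (lam • (1 : Matrix (Fin d) (Fin d) ℝ)).det) := by
        have h0 : Λ 0 = lam • (1 : Matrix (Fin d) (Fin d) ℝ) := by
          rw [hΛ 0]; simp
        rw [Real.log_div (hdpos K).ne' (by rw [← h0]; exact (hdpos 0).ne'), h0]
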